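/- Let Γ be a finitely generated free abelian group and ω : Γ → ℝ an injective group homomorphism. Let Λ_ω be the Novikov field of functions λ : Γ → ℂ such that {γ : λ(γ) ≠ 0, −ω(γ) ≤ K} is finite for all K, with convolution product. For a homomorphism η : Γ → ℂ let L¹_η be the Banach algebra of λ : Γ → ℂ with Σ_γ |λ(γ) e^{η(γ)}| < ∞. Suppose 0 ≠ λ ∈ Λ_ω ∩ L¹_η. Then there exists t₀ ∈ ℝ such that the inverse λ^{−1} (taken in the field Λ_ω) lies in Λ_ω ∩ L¹_{η+tω} for all t ≥ t₀. -/

import Mathlib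

/-- Convolution product on functions `Γ → ℂ` for an additive group `Γ`. -/
noncomputable def aconv {Γ : Type*} [AddCommGroup Γ] (a b : Γ → ℂ) : Γ → ℂ :=
  fun ρ => ∑' σ : Γ, a σ * b (ρ - σ)

/-- The convolution unit: the delta function at `0`. -/
noncomputable def aone {Γ : Type*} [AddCommGroup Γ] [DecidableEq Γ] : Γ → ℂ :=
  fun γ => if γ = 0 then 1 else 0

/-- The Novikov condition: `{γ : l γ ≠ 0, -ω(γ) ≤ K}` is finite for all `K`. -/
def Novikov {Γ : Type*} (ω : Γ → ℝ) (l : Γ → ℂ) : Prop :=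
  ∀ K : ℝ, {γ : Γ | l γ ≠ 0 ∧ -ω γ ≤ K}.Finite

open scoped ENNReal NNReal

section Aux

variable {Γ : Type*} [AddCommGroup Γ] [DecidableEq Γ]

lemma aconv_comm (a b : Γ → ℂ) : aconv a b = aconv b a := by
  funext ρ
  show ∑' σ : Γ, a σ * b (ρ - σ) = ∑' σ : Γ, b σ * a (ρ - σ)
  rw [← (Equiv.subLeft ρ).tsum_eq (fun σ => b σ * a (ρ - σ))]
  refine tsum_congr fun σ => ?_
  simp [mul_comm]

lemma aconv_exists (a b : Γ → ℂ) (ρ : Γ) (h : aconv a b ρ ≠ 0) :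
    ∃ σ, a σ ≠ 0 ∧ b (ρ - σ) ≠ 0 := by
  by_contra hc
  push_neg at hc
  apply h
  have hz : ∀ σ, a σ * b (ρ - σ) = 0 := by
    intro σ
    by_cases h0 : a σ = 0
    · simp [h0]
    · simp [hc σ h0]
  show ∑' σ : Γ, a σ * b (ρ - σ) = 0
  simp [hz]

lemma novikov_conv {ω : Γ →+ ℝ} {a b : Γ → ℂ}
    (ha : Novikov ω a) (hb : Novikov ω b)
    (ha0 : ∀ γ, a γ ≠ 0 → ω γ ≤ 0) (hb0 : ∀ γ, b γ ≠ 0 → ω γ ≤ 0) :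
    Novikov ω (aconv a b) := by
  intro K
  refine ((ha K).add (hb K)).subset ?_
  rintro γ ⟨hγ, hK⟩
  obtain ⟨σ, hσ, hτ⟩ := aconv_exists a b γ hγ
  have hm : ω (γ - σ) = ω γ - ω σ := map_sub ω γ σ
  have h1 := ha0 σ hσ
  have h2 := hb0 _ hτ
  refine Set.mem_add.2 ⟨σ, ⟨hσ, by linarith⟩, γ - σ, ⟨hτ, by linarith⟩, by abel⟩

lemma supp_conv {ω : Γ →+ ℝ} {a b : Γ → ℂ} {x y : ℝ}
    (ha : ∀ γ, a γ ≠ 0 → ω γ ≤ x) (hb : ∀ γ, b γ ≠ 0 → ω γ ≤ y) :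
    ∀ γ, aconv a b γ ≠ 0 → ω γ ≤ x + y := by
  intro γ h
  obtain ⟨σ, hσ, hτ⟩ := aconv_exists a b γ h
  have hm : ω (γ - σ) = ω γ - ω σ := map_sub ω γ σ
  have h1 := ha σ hσ
  have h2 := hb _ hτ
  linarith

lemma novikov_shift {ω : Γ →+ ℝ} {f g : Γ → ℂ} (γ₀ : Γ)
    (h : ∀ ρ, g ρ ≠ 0 → f (ρ + γ₀) ≠ 0) (hf : Novikov ω f) : Novikov ω g := by
  intro K
  have hfin := hf (K - ω γ₀)
  have hsub : {ρ | g ρ ≠ 0 ∧ -ω ρ ≤ K}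
      ⊆ (fun ρ => ρ + γ₀) ⁻¹' {γ | f γ ≠ 0 ∧ -ω γ ≤ K - ω γ₀} := by
    rintro ρ ⟨h1, h2⟩
    refine ⟨h ρ h1, ?_⟩
    have : ω (ρ + γ₀) = ω ρ + ω γ₀ := map_add ω ρ γ₀
    simp only [Set.mem_setOf_eq] at *
    linarith
  exact ((hfin.preimage ((add_left_injective γ₀).injOn)).subset hsub)

lemma etsum_nnnorm_le {ι : Type*} (f : ι → ℂ) :
    (‖∑' i, f i‖₊ : ℝ≥0∞) ≤ ∑' i, (‖f i‖₊ : ℝ≥0∞) := by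
  by_cases hn : Summable fun i => ‖f i‖₊
  · rw [← ENNReal.coe_tsum hn]
    exact_mod_cast nnnorm_tsum_le hn
  · have : (∑' i, (‖f i‖₊ : ℝ≥0∞)) = ⊤ := by
      by_contra h
      exact hn (ENNReal.tsum_coe_ne_top_iff_summable.1 h)
    simp [this]

lemma summable_of_etsum_ne_top {ι : Type*} {f : ι → ℂ}
    (h : ∑' i, (‖f i‖₊ : ℝ≥0∞) ≠ ⊤) : Summable f :=
  Summable.of_nnnorm (ENNReal.tsum_coe_ne_top_iff_summable.1 h)

lemma weight_split {W : Γ → ℝ≥0∞} (hW : ∀ γ σ : Γ, W (γ + σ) = W γ * W σ)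
    (a b : Γ → ℂ) (γ σ : Γ) :
    ((‖a σ‖₊ : ℝ≥0∞) * ‖b (γ - σ)‖₊) * W γ
      = ((‖a σ‖₊ : ℝ≥0∞) * W σ) * ((‖b (γ - σ)‖₊ : ℝ≥0∞) * W (γ - σ)) := by
  have h : W σ * W (γ - σ) = W γ := by
    rw [← hW]
    congr 1
    abel
  rw [← h]
  ring

lemma key_conv {W : Γ → ℝ≥0∞} (hW : ∀ γ σ : Γ, W (γ + σ) = W γ * W σ)
    (a b : Γ → ℂ) :
    ∑' γ, (‖aconv a b γ‖₊ : ℝ≥0∞) * W γ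
      ≤ (∑' σ, (‖a σ‖₊ : ℝ≥0∞) * W σ) * ∑' σ, (‖b σ‖₊ : ℝ≥0∞) * W σ := by
  calc ∑' γ, (‖aconv a b γ‖₊ : ℝ≥0∞) * W γ
      ≤ ∑' γ, (∑' σ, (‖a σ‖₊ : ℝ≥0∞) * ‖b (γ - σ)‖₊) * W γ := by
        refine ENNReal.tsum_le_tsum fun γ => mul_le_mul_left ?_ _
        refine le_trans (etsum_nnnorm_le _) (ENNReal.tsum_le_tsum fun σ => ?_)
        simp [nnnorm_mul]
    _ = ∑' γ, ∑' σ, ((‖a σ‖₊ : ℝ≥0∞) * W σ) * ((‖b (γ - σ)‖₊ : ℝ≥0∞) * W (γ - σ)) := by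
        refine tsum_congr fun γ => ?_
        rw [← ENNReal.tsum_mul_right]
        exact tsum_congr fun σ => weight_split hW a b γ σ
    _ = ∑' σ, ∑' γ, ((‖a σ‖₊ : ℝ≥0∞) * W σ) * ((‖b (γ - σ)‖₊ : ℝ≥0∞) * W (γ - σ)) :=
        ENNReal.tsum_comm
    _ = ∑' σ, ((‖a σ‖₊ : ℝ≥0∞) * W σ) * ∑' γ, ((‖b (γ - σ)‖₊ : ℝ≥0∞) * W (γ - σ)) :=
        tsum_congr fun σ => ENNReal.tsum_mul_left
    _ = ∑' σ, ((‖a σ‖₊ : ℝ≥0∞) * W σ) * ∑' τ, ((‖b τ‖₊ : ℝ≥0∞) * W τ) := by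
        refine tsum_congr fun σ => ?_
        congr 1
        exact (Equiv.subRight σ).tsum_eq fun τ => (‖b τ‖₊ : ℝ≥0∞) * W τ
    _ = _ := ENNReal.tsum_mul_right

/-- Convolution powers. -/
noncomputable def pw (u : Γ → ℂ) : ℕ → Γ → ℂ
  | 0 => aone
  | n + 1 => aconv u (pw u n)

lemma tsum_aone (W : Γ → ℝ≥0∞) (hW0 : W 0 = 1) :
    ∑' γ : Γ, (‖aone γ‖₊ : ℝ≥0∞) * W γ = 1 := by
  rw [tsum_eq_single 0 (fun γ hγ => by simp [aone, hγ])]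
  simp [aone, hW0]

lemma pw_bound {W : Γ → ℝ≥0∞} (hW : ∀ γ σ : Γ, W (γ + σ) = W γ * W σ)
    (hW0 : W 0 = 1) (u : Γ → ℂ) (n : ℕ) :
    ∑' γ, (‖pw u n γ‖₊ : ℝ≥0∞) * W γ ≤ (∑' σ, (‖u σ‖₊ : ℝ≥0∞) * W σ) ^ n := by
  induction n with
  | zero => simp [pw, tsum_aone W hW0]
  | succ n ih =>
      calc ∑' γ, (‖pw u (n + 1) γ‖₊ : ℝ≥0∞) * W γ
          ≤ (∑' σ, (‖u σ‖₊ : ℝ≥0∞) * W σ) * ∑' γ, (‖pw u n γ‖₊ : ℝ≥0∞) * W γ :=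
            key_conv hW u (pw u n)
        _ ≤ (∑' σ, (‖u σ‖₊ : ℝ≥0∞) * W σ) * (∑' σ, (‖u σ‖₊ : ℝ≥0∞) * W σ) ^ n :=
            mul_le_mul_right ih _
        _ = _ := (pow_succ' _ _).symm

variable {W : Γ → ℝ≥0∞}

lemma pw_summable (hW : ∀ γ σ : Γ, W (γ + σ) = W γ * W σ) (hW0 : W 0 = 1)
    (hWne : ∀ γ, W γ ≠ 0) (hWtop : ∀ γ, W γ ≠ ⊤) {u : Γ → ℂ}
    (hA : ∑' σ, (‖u σ‖₊ : ℝ≥0∞) * W σ ≤ 2⁻¹) (γ : Γ) :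
    ∑' n, (‖pw u n γ‖₊ : ℝ≥0∞) ≤ 2 * (W γ)⁻¹ := by
  have h1 : ∀ n, (‖pw u n γ‖₊ : ℝ≥0∞) ≤ (2⁻¹ : ℝ≥0∞) ^ n * (W γ)⁻¹ := by
    intro n
    have h2 : (‖pw u n γ‖₊ : ℝ≥0∞) * W γ ≤ (2⁻¹ : ℝ≥0∞) ^ n :=
      le_trans (le_trans (ENNReal.le_tsum γ) (pw_bound hW hW0 u n)) (pow_le_pow_left' hA n)
    have := (ENNReal.le_div_iff_mul_le (Or.inl (hWne γ)) (Or.inl (hWtop γ))).2 h2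
    rwa [ENNReal.div_eq_inv_mul, mul_comm] at this
  calc ∑' n, (‖pw u n γ‖₊ : ℝ≥0∞)
      ≤ ∑' n, (2⁻¹ : ℝ≥0∞) ^ n * (W γ)⁻¹ := ENNReal.tsum_le_tsum h1
    _ = (∑' n, (2⁻¹ : ℝ≥0∞) ^ n) * (W γ)⁻¹ := ENNReal.tsum_mul_right
    _ = 2 * (W γ)⁻¹ := by rw [ENNReal.tsum_geometric]; norm_num

lemma s_summable (hW : ∀ γ σ : Γ, W (γ + σ) = W γ * W σ) (hW0 : W 0 = 1)
    (hWne : ∀ γ, W γ ≠ 0) (hWtop : ∀ γ, W γ ≠ ⊤) {u : Γ → ℂ}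
    (hA : ∑' σ, (‖u σ‖₊ : ℝ≥0∞) * W σ ≤ 2⁻¹) (γ : Γ) :
    Summable fun n => pw u n γ := by
  refine summable_of_etsum_ne_top (ne_top_of_le_ne_top ?_ (pw_summable hW hW0 hWne hWtop hA γ))
  exact ENNReal.mul_ne_top (by norm_num) (ENNReal.inv_ne_top.2 (hWne γ))

lemma s_bound (hW : ∀ γ σ : Γ, W (γ + σ) = W γ * W σ) (hW0 : W 0 = 1)
    {u : Γ → ℂ} (hA : ∑' σ, (‖u σ‖₊ : ℝ≥0∞) * W σ ≤ 2⁻¹) :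
    ∑' γ, (‖(∑' n, pw u n γ)‖₊ : ℝ≥0∞) * W γ ≤ 2 := by
  calc ∑' γ, (‖(∑' n, pw u n γ)‖₊ : ℝ≥0∞) * W γ
      ≤ ∑' γ, (∑' n, (‖pw u n γ‖₊ : ℝ≥0∞)) * W γ :=
        ENNReal.tsum_le_tsum fun γ => mul_le_mul_left (etsum_nnnorm_le _) _
    _ = ∑' γ, ∑' n, (‖pw u n γ‖₊ : ℝ≥0∞) * W γ :=
        tsum_congr fun γ => ENNReal.tsum_mul_right.symm
    _ = ∑' n, ∑' γ, (‖pw u n γ‖₊ : ℝ≥0∞) * W γ := ENNReal.tsum_comm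
    _ ≤ ∑' n : ℕ, (2⁻¹ : ℝ≥0∞) ^ n :=
        ENNReal.tsum_le_tsum fun n =>
          le_trans (pw_bound hW hW0 u n) (pow_le_pow_left' hA n)
    _ = 2 := by rw [ENNReal.tsum_geometric]; norm_num

lemma conv_s_bound (hW : ∀ γ σ : Γ, W (γ + σ) = W γ * W σ) (hW0 : W 0 = 1)
    (hWne : ∀ γ, W γ ≠ 0) (hWtop : ∀ γ, W γ ≠ ⊤) {u : Γ → ℂ}
    (hA : ∑' σ, (‖u σ‖₊ : ℝ≥0∞) * W σ ≤ 2⁻¹) (γ : Γ) :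
    ∑' σ, (‖u σ‖₊ : ℝ≥0∞) * (∑' n, (‖pw u n (γ - σ)‖₊ : ℝ≥0∞)) ≤ (W γ)⁻¹ := by
  have hWinv : ∀ σ : Γ, (W (γ - σ))⁻¹ = W σ * (W γ)⁻¹ := by
    intro σ
    have h : W γ = W σ * W (γ - σ) := by
      rw [← hW]; congr 1; abel
    rw [h, ENNReal.mul_inv (Or.inl (hWne σ)) (Or.inl (hWtop σ)), ← mul_assoc,
      ENNReal.mul_inv_cancel (hWne σ) (hWtop σ), one_mul]
  calc ∑' σ, (‖u σ‖₊ : ℝ≥0∞) * (∑' n, (‖pw u n (γ - σ)‖₊ : ℝ≥0∞))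
      ≤ ∑' σ, (‖u σ‖₊ : ℝ≥0∞) * (2 * (W (γ - σ))⁻¹) :=
        ENNReal.tsum_le_tsum fun σ =>
          mul_le_mul_right (pw_summable hW hW0 hWne hWtop hA (γ - σ)) _
    _ = ∑' σ, (2 * (W γ)⁻¹) * ((‖u σ‖₊ : ℝ≥0∞) * W σ) := by
        refine tsum_congr fun σ => ?_
        rw [hWinv σ]
        ring
    _ = (2 * (W γ)⁻¹) * ∑' σ, (‖u σ‖₊ : ℝ≥0∞) * W σ := ENNReal.tsum_mul_left
    _ ≤ (2 * (W γ)⁻¹) * 2⁻¹ := mul_le_mul_right hA _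
    _ = (W γ)⁻¹ * (2 * 2⁻¹) := by ring
    _ = (W γ)⁻¹ := by
        rw [ENNReal.mul_inv_cancel (by norm_num) (by norm_num), mul_one]

lemma key_identity (hW : ∀ γ σ : Γ, W (γ + σ) = W γ * W σ) (hW0 : W 0 = 1)
    (hWne : ∀ γ, W γ ≠ 0) (hWtop : ∀ γ, W γ ≠ ⊤) {u : Γ → ℂ}
    (hA : ∑' σ, (‖u σ‖₊ : ℝ≥0∞) * W σ ≤ 2⁻¹) (γ : Γ) :
    aconv u (fun ρ => ∑' n, pw u n ρ) γ = ∑' n, pw u (n + 1) γ := by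
  have hF : Summable (Function.uncurry fun (σ : Γ) (n : ℕ) => u σ * pw u n (γ - σ)) := by
    apply summable_of_etsum_ne_top
    have h0 : ∀ p : Γ × ℕ,
        (‖(Function.uncurry fun (σ : Γ) (n : ℕ) => u σ * pw u n (γ - σ)) p‖₊ : ℝ≥0∞)
        = (‖u p.1‖₊ : ℝ≥0∞) * ‖pw u p.2 (γ - p.1)‖₊ := fun p => by
      simp [Function.uncurry, nnnorm_mul]
    have heq : (∑' p : Γ × ℕ,
        (‖(Function.uncurry fun (σ : Γ) (n : ℕ) => u σ * pw u n (γ - σ)) p‖₊ : ℝ≥0∞))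
        = ∑' σ, (‖u σ‖₊ : ℝ≥0∞) * (∑' n, (‖pw u n (γ - σ)‖₊ : ℝ≥0∞)) := by
      rw [tsum_congr h0]
      rw [ENNReal.tsum_prod (f := fun (σ : Γ) (n : ℕ) => (‖u σ‖₊ : ℝ≥0∞) * ‖pw u n (γ - σ)‖₊)]
      exact tsum_congr fun σ => ENNReal.tsum_mul_left
    rw [heq]
    exact ne_top_of_le_ne_top (ENNReal.inv_ne_top.2 (hWne γ))
      (conv_s_bound hW hW0 hWne hWtop hA γ)
  calc aconv u (fun ρ => ∑' n, pw u n ρ) γ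
      = ∑' σ, u σ * ∑' n, pw u n (γ - σ) := rfl
    _ = ∑' σ, ∑' n, u σ * pw u n (γ - σ) := tsum_congr fun σ => tsum_mul_left.symm
    _ = ∑' n, ∑' σ, u σ * pw u n (γ - σ) := (hF.tsum_comm).symm
    _ = ∑' n, pw u (n + 1) γ := rfl

lemma inverse_identity (hW : ∀ γ σ : Γ, W (γ + σ) = W γ * W σ) (hW0 : W 0 = 1)
    (hWne : ∀ γ, W γ ≠ 0) (hWtop : ∀ γ, W γ ≠ ⊤) {u : Γ → ℂ}
    (hA : ∑' σ, (‖u σ‖₊ : ℝ≥0∞) * W σ ≤ 2⁻¹) :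
    aconv (fun ρ => aone ρ - u ρ) (fun ρ => ∑' n, pw u n ρ) = aone := by
  funext γ
  have hsum1 : Summable fun σ : Γ => aone σ * (∑' n, pw u n (γ - σ)) := by
    refine summable_of_ne_finset_zero (s := {0}) fun σ hσ => ?_
    simp only [Finset.mem_singleton] at hσ
    simp [aone, hσ]
  have hsum2 : Summable fun σ : Γ => u σ * (∑' n, pw u n (γ - σ)) := by
    apply summable_of_etsum_ne_top
    have hle : (∑' σ : Γ, (‖u σ * (∑' n, pw u n (γ - σ))‖₊ : ℝ≥0∞))
        ≤ ∑' σ, (‖u σ‖₊ : ℝ≥0∞) * (∑' n, (‖pw u n (γ - σ)‖₊ : ℝ≥0∞)) := by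
      refine ENNReal.tsum_le_tsum fun σ => ?_
      rw [nnnorm_mul, ENNReal.coe_mul]
      exact mul_le_mul_right (etsum_nnnorm_le _) _
    exact ne_top_of_le_ne_top (ne_top_of_le_ne_top (ENNReal.inv_ne_top.2 (hWne γ))
      (conv_s_bound hW hW0 hWne hWtop hA γ)) hle
  calc aconv (fun ρ => aone ρ - u ρ) (fun ρ => ∑' n, pw u n ρ) γ
      = ∑' σ, (aone σ * (∑' n, pw u n (γ - σ)) - u σ * (∑' n, pw u n (γ - σ))) :=
        tsum_congr fun σ => sub_mul _ _ _
    _ = (∑' σ, aone σ * (∑' n, pw u n (γ - σ))) - ∑' σ, u σ * (∑' n, pw u n (γ - σ)) :=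
        hsum1.tsum_sub hsum2
    _ = (∑' n, pw u n γ) - ∑' n, pw u (n + 1) γ := by
        have h2 : (∑' σ : Γ, u σ * ∑' n, pw u n (γ - σ)) = ∑' n, pw u (n + 1) γ :=
          key_identity hW hW0 hWne hWtop hA γ
        rw [h2]
        congr 1
        rw [tsum_eq_single 0 (fun σ hσ => by simp [aone, hσ])]
        simp [aone]
    _ = pw u 0 γ := by
        rw [Summable.tsum_eq_zero_add (s_summable hW hW0 hWne hWtop hA γ)]
        ring
    _ = aone γ := rfl

end Aux

/-- If `0 ≠ l ∈ Λ_ω ∩ L¹_η`, then the inverse of `l` in the Novikov field `Λ_ω` lies in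
`Λ_ω ∩ L¹_{η + tω}` for all sufficiently large `t`. -/
theorem stmt_8 {Γ : Type*} [AddCommGroup Γ] [DecidableEq Γ]
    [Module.Free ℤ Γ] [Module.Finite ℤ Γ]
    (ω : Γ →+ ℝ) (hω : Function.Injective ω) (η : Γ →+ ℂ)
    (l : Γ → ℂ) (hl0 : l ≠ 0) (hlN : Novikov ω l)
    (hl1 : Summable fun γ => ‖l γ * Complex.exp (η γ)‖) :
    ∃ li : Γ → ℂ, aconv l li = aone ∧ aconv li l = aone ∧ Novikov ω li ∧
      ∃ t₀ : ℝ, ∀ t : ℝ, t₀ ≤ t →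
        Summable fun γ => ‖li γ * Complex.exp (η γ + (t : ℂ) * (ω γ : ℂ))‖ := by
  classical
  -- ### Step 1: the element of the support with maximal `ω`
  obtain ⟨γ₁, hγ₁⟩ : ∃ γ, l γ ≠ 0 := Function.ne_iff.1 hl0
  obtain ⟨γ₀, ⟨hγ₀ne, hγ₀ge⟩, hγ₀max⟩ :=
    Set.Finite.exists_maximalFor (ω : Γ → ℝ) _ (hlN (-ω γ₁)) ⟨γ₁, hγ₁, le_rfl⟩
  have hmax : ∀ γ, l γ ≠ 0 → ω γ ≤ ω γ₀ := by
    intro γ hγ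
    by_contra hgt
    push_neg at hgt
    have hγS : γ ∈ {γ | l γ ≠ 0 ∧ -ω γ ≤ -ω γ₁} := ⟨hγ, by linarith⟩
    have := hγ₀max hγS (le_of_lt hgt)
    linarith
  -- ### Step 2: normalize by the leading monomial
  set c : ℂ := (l γ₀)⁻¹ with hc_def
  have hc : c * l γ₀ = 1 := inv_mul_cancel₀ hγ₀ne
  set u : Γ → ℂ := fun ρ => aone ρ - c * l (ρ + γ₀) with hu_def
  have hu0 : u 0 = 0 := by simp [hu_def, aone, hc]
  have hu_ne : ∀ ρ, u ρ ≠ 0 → l (ρ + γ₀) ≠ 0 := by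
    intro ρ h hl'
    rcases eq_or_ne ρ 0 with rfl | hρ
    · exact h hu0
    · exact h (by simp [hu_def, aone, hρ, hl'])
  have hu_neg : ∀ ρ, u ρ ≠ 0 → ω ρ < 0 := by
    intro ρ h
    have hρ : ρ ≠ 0 := by rintro rfl; exact h hu0
    have h1 := hmax _ (hu_ne ρ h)
    have h2 : ω (ρ + γ₀) ≠ ω γ₀ := by
      intro he
      exact hρ (by simpa using hω he)
    have h3 : ω (ρ + γ₀) = ω ρ + ω γ₀ := map_add ω ρ γ₀
    rcases lt_or_eq_of_le h1 with hlt | heq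
    · linarith
    · exact absurd heq h2
  have hu_nov : Novikov ω u := novikov_shift γ₀ hu_ne hlN
  -- ### Step 3: the gap `δ`
  set F : Finset Γ := (hu_nov 1).toFinset with hF_def
  set D : Finset ℝ := insert (1 : ℝ) (F.image fun ρ => -ω ρ) with hD_def
  have hDne : D.Nonempty := ⟨1, Finset.mem_insert_self _ _⟩
  set δ : ℝ := D.min' hDne with hδ_def
  have hδpos : 0 < δ := by
    have hmem : δ ∈ D := D.min'_mem hDne
    rw [hD_def] at hmem
    rcases Finset.mem_insert.1 hmem with h1 | h2
    · rw [h1]; norm_num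
    · obtain ⟨ρ, hρF, hρeq⟩ := Finset.mem_image.1 h2
      rw [hF_def, (hu_nov 1).mem_toFinset] at hρF
      have := hu_neg ρ hρF.1
      rw [← hρeq]; linarith
  have hδu : ∀ ρ, u ρ ≠ 0 → ω ρ ≤ -δ := by
    intro ρ h
    by_cases hK : -ω ρ ≤ 1
    · have hρF : ρ ∈ F := by
        rw [hF_def, (hu_nov 1).mem_toFinset]; exact ⟨h, hK⟩
      have : δ ≤ -ω ρ := Finset.min'_le _ _
        (Finset.mem_insert.2 (Or.inr (Finset.mem_image_of_mem _ hρF)))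
      linarith
    · have h1 : δ ≤ 1 := Finset.min'_le _ _ (Finset.mem_insert_self _ _)
      push_neg at hK
      linarith
  -- ### Step 4: the weights
  set w : ℝ → Γ → ℝ≥0∞ := fun t γ => ENNReal.ofReal (Real.exp ((η γ).re + t * ω γ))
    with hw_def
  have hw_ne : ∀ t γ, w t γ ≠ 0 := fun t γ => (ENNReal.ofReal_pos.2 (Real.exp_pos _)).ne'
  have hw_top : ∀ t γ, w t γ ≠ ⊤ := fun t γ => ENNReal.ofReal_ne_top
  have hw_mul : ∀ (t : ℝ) (γ σ : Γ), w t (γ + σ) = w t γ * w t σ := by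
    intro t γ σ
    have h : (η (γ + σ)).re + t * ω (γ + σ)
        = ((η γ).re + t * ω γ) + ((η σ).re + t * ω σ) := by
      rw [map_add, map_add, Complex.add_re]; ring
    simp only [hw_def]
    rw [h, Real.exp_add, ENNReal.ofReal_mul (Real.exp_nonneg _)]
  have hw0 : ∀ t : ℝ, w t 0 = 1 := by intro t; simp [hw_def]
  have hnorm : ∀ (t : ℝ) (γ : Γ) (x : ℂ),
      (‖x * Complex.exp (η γ + (t : ℂ) * (ω γ : ℂ))‖₊ : ℝ≥0∞) = (‖x‖₊ : ℝ≥0∞) * w t γ := by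
    intro t γ x
    have hre : (η γ + (t : ℂ) * (ω γ : ℂ)).re = (η γ).re + t * ω γ := by
      simp [Complex.add_re, Complex.mul_re]
    rw [nnnorm_mul, ENNReal.coe_mul]
    congr 1
    rw [show ((‖Complex.exp (η γ + (t : ℂ) * (ω γ : ℂ))‖₊ : ℝ≥0) : ℝ≥0∞) = ENNReal.ofReal ‖Complex.exp (η γ + (t : ℂ) * (ω γ : ℂ))‖ from (ofReal_norm _).symm, Complex.norm_exp, hre]
  -- shifting sums by `γ₀`
  have hshift : ∀ (t : ℝ) (f : Γ → ℂ),
      ∑' σ : Γ, (‖f (σ + γ₀)‖₊ : ℝ≥0∞) * w t σ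
        = (w t γ₀)⁻¹ * ∑' γ : Γ, (‖f γ‖₊ : ℝ≥0∞) * w t γ := by
    intro t f
    have hcan : (w t γ₀)⁻¹ * w t γ₀ = 1 :=
      ENNReal.inv_mul_cancel (hw_ne t γ₀) (hw_top t γ₀)
    have h1 : ∀ σ : Γ, (‖f (σ + γ₀)‖₊ : ℝ≥0∞) * w t σ
        = (w t γ₀)⁻¹ * ((‖f (σ + γ₀)‖₊ : ℝ≥0∞) * w t (σ + γ₀)) := by
      intro σ
      calc (‖f (σ + γ₀)‖₊ : ℝ≥0∞) * w t σ
          = ((w t γ₀)⁻¹ * w t γ₀) * ((‖f (σ + γ₀)‖₊ : ℝ≥0∞) * w t σ) := by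
            rw [hcan, one_mul]
        _ = (w t γ₀)⁻¹ * ((‖f (σ + γ₀)‖₊ : ℝ≥0∞) * (w t σ * w t γ₀)) := by ring
        _ = _ := by rw [← hw_mul]
    rw [tsum_congr h1, ENNReal.tsum_mul_left]
    congr 1
    exact (Equiv.addRight γ₀).tsum_eq fun γ => (‖f γ‖₊ : ℝ≥0∞) * w t γ
  -- ### Step 5: `l` (hence `u`) is summable at weight `0`
  have hl1' : (∑' γ : Γ, (‖l γ‖₊ : ℝ≥0∞) * w 0 γ) ≠ ⊤ := by
    have h0 : ∀ γ : Γ, ‖l γ * Complex.exp (η γ)‖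
        = ((‖l γ * Complex.exp (η γ + ((0 : ℝ) : ℂ) * (ω γ : ℂ))‖₊ : ℝ≥0) : ℝ) := by
      intro γ; simp [coe_nnnorm]
    have h1 : Summable fun γ : Γ =>
        ‖l γ * Complex.exp (η γ + ((0 : ℝ) : ℂ) * (ω γ : ℂ))‖₊ :=
      NNReal.summable_coe.1 (by simpa [h0] using hl1)
    have h2 := ENNReal.tsum_coe_ne_top_iff_summable.2 h1
    intro htop
    exact h2 (by rw [tsum_congr (fun γ => hnorm 0 γ (l γ))]; exact htop)
  have hA0top : (∑' σ : Γ, (‖u σ‖₊ : ℝ≥0∞) * w 0 σ) ≠ ⊤ := by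
    have hb : ∀ σ : Γ, (‖u σ‖₊ : ℝ≥0∞) * w 0 σ
        ≤ (‖aone σ‖₊ : ℝ≥0∞) * w 0 σ + (‖c * l (σ + γ₀)‖₊ : ℝ≥0∞) * w 0 σ := by
      intro σ
      rw [← add_mul]
      refine mul_le_mul_left ?_ _
      rw [← ENNReal.coe_add]
      exact ENNReal.coe_le_coe.2 (by
        simpa [hu_def] using nnnorm_sub_le (aone σ) (c * l (σ + γ₀)))
    refine ne_top_of_le_ne_top ?_ (ENNReal.tsum_le_tsum hb)
    rw [ENNReal.tsum_add]
    refine ENNReal.add_ne_top.2 ⟨?_, ?_⟩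
    · rw [tsum_aone (w 0) (hw0 0)]; exact ENNReal.one_ne_top
    · have h2 : ∀ σ : Γ, (‖c * l (σ + γ₀)‖₊ : ℝ≥0∞) * w 0 σ
          = (‖c‖₊ : ℝ≥0∞) * ((‖l (σ + γ₀)‖₊ : ℝ≥0∞) * w 0 σ) := by
        intro σ; rw [nnnorm_mul, ENNReal.coe_mul, mul_assoc]
      rw [tsum_congr h2, ENNReal.tsum_mul_left, hshift 0 l]
      exact ENNReal.mul_ne_top ENNReal.coe_ne_top
        (ENNReal.mul_ne_top (ENNReal.inv_ne_top.2 (hw_ne 0 γ₀)) hl1')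
  -- ### Step 6: decay of the weighted norm of `u`
  have hdecay : ∀ t : ℝ, 0 ≤ t →
      (∑' σ : Γ, (‖u σ‖₊ : ℝ≥0∞) * w t σ)
        ≤ ENNReal.ofReal (Real.exp (-(t * δ))) * ∑' σ : Γ, (‖u σ‖₊ : ℝ≥0∞) * w 0 σ := by
    intro t ht
    rw [← ENNReal.tsum_mul_left]
    refine ENNReal.tsum_le_tsum fun σ => ?_
    rcases eq_or_ne (u σ) 0 with h0 | h0
    · simp [h0]
    · have hω1 : ω σ ≤ -δ := hδu σ h0
      have hsplit : w t σ = ENNReal.ofReal (Real.exp (t * ω σ)) * w 0 σ := by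
        simp only [hw_def]
        rw [← ENNReal.ofReal_mul (Real.exp_nonneg _), ← Real.exp_add]
        congr 2
        ring
      rw [hsplit]
      calc (‖u σ‖₊ : ℝ≥0∞) * (ENNReal.ofReal (Real.exp (t * ω σ)) * w 0 σ)
          ≤ (‖u σ‖₊ : ℝ≥0∞) * (ENNReal.ofReal (Real.exp (-(t * δ))) * w 0 σ) := by
            refine mul_le_mul_right (mul_le_mul_left ?_ _) _
            refine ENNReal.ofReal_le_ofReal (Real.exp_le_exp.2 ?_)
            nlinarith [mul_le_mul_of_nonneg_left hω1 ht]
        _ = ENNReal.ofReal (Real.exp (-(t * δ))) * ((‖u σ‖₊ : ℝ≥0∞) * w 0 σ) := by ring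
  -- ### Step 7: choice of `t₀`
  set S : ℝ := (∑' σ : Γ, (‖u σ‖₊ : ℝ≥0∞) * w 0 σ).toReal with hS_def
  have hS0 : 0 ≤ S := ENNReal.toReal_nonneg
  set t₀ : ℝ := max 0 (Real.log (2 * S + 1) / δ) with ht₀_def
  have hA : ∀ t : ℝ, t₀ ≤ t → (∑' σ : Γ, (‖u σ‖₊ : ℝ≥0∞) * w t σ) ≤ 2⁻¹ := by
    intro t ht
    have ht0 : 0 ≤ t := le_trans (le_max_left _ _) ht
    have hlog : Real.log (2 * S + 1) ≤ t * δ := by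
      have h := le_trans (le_max_right _ _) ht
      rw [div_le_iff₀ hδpos] at h
      linarith
    have hexp : 2 * S + 1 ≤ Real.exp (t * δ) := by
      have h1 : (0 : ℝ) < 2 * S + 1 := by linarith
      calc 2 * S + 1 = Real.exp (Real.log (2 * S + 1)) := (Real.exp_log h1).symm
        _ ≤ _ := Real.exp_le_exp.2 hlog
    have hreal : Real.exp (-(t * δ)) * S ≤ 1 / 2 := by
      rw [Real.exp_neg, inv_mul_le_iff₀ (Real.exp_pos _)]
      linarith
    calc ∑' σ : Γ, (‖u σ‖₊ : ℝ≥0∞) * w t σ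
        ≤ ENNReal.ofReal (Real.exp (-(t * δ))) * ∑' σ : Γ, (‖u σ‖₊ : ℝ≥0∞) * w 0 σ :=
          hdecay t ht0
      _ = ENNReal.ofReal (Real.exp (-(t * δ))) * ENNReal.ofReal S :=
          congrArg _ (ENNReal.ofReal_toReal hA0top).symm
      _ = ENNReal.ofReal (Real.exp (-(t * δ)) * S) :=
          (ENNReal.ofReal_mul (Real.exp_nonneg _)).symm
      _ ≤ ENNReal.ofReal (1 / 2) := ENNReal.ofReal_le_ofReal hreal
      _ = 2⁻¹ := by rw [ENNReal.ofReal_div_of_pos] <;> norm_num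
  -- ### Step 8: the inverse
  set s : Γ → ℂ := fun γ => ∑' n, pw u n γ with hs_def
  set li : Γ → ℂ := fun γ => c * s (γ + γ₀) with hli_def
  have hAt₀ : (∑' σ : Γ, (‖u σ‖₊ : ℝ≥0∞) * w t₀ σ) ≤ 2⁻¹ := hA t₀ le_rfl
  have hinv : aconv (fun ρ => aone ρ - u ρ) s = aone :=
    inverse_identity (hw_mul t₀) (hw0 t₀) (hw_ne t₀) (hw_top t₀) hAt₀
  have huv : (fun ρ => aone ρ - u ρ) = fun ρ => c * l (ρ + γ₀) := by
    funext ρ; simp [hu_def]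
  rw [huv] at hinv
  have h1 : aconv l li = aone := by
    funext ρ
    have hstep : aconv l li ρ = aconv (fun ρ' => c * l (ρ' + γ₀)) s ρ := by
      show (∑' σ : Γ, l σ * li (ρ - σ)) = ∑' σ : Γ, (c * l (σ + γ₀)) * s (ρ - σ)
      rw [← (Equiv.addRight γ₀).tsum_eq (fun σ => l σ * li (ρ - σ))]
      refine tsum_congr fun σ => ?_
      have harg : ρ - (σ + γ₀) + γ₀ = ρ - σ := by abel
      simp only [Equiv.coe_addRight, hli_def]
      rw [harg]
      ring
    rw [hstep, hinv]
  have h2 : aconv li l = aone := by rw [aconv_comm]; exact h1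
  -- ### Step 9: Novikov property of the inverse
  have hpω : ∀ n (γ : Γ), pw u n γ ≠ 0 → ω γ ≤ -((n : ℝ) * δ) := by
    intro n
    induction n with
    | zero =>
        intro γ h
        have hγ : γ = 0 := by
          by_contra hne; exact h (by simp [pw, aone, hne])
        simp [hγ]
    | succ n ih =>
        intro γ h
        have hd := supp_conv (ω := ω) (a := u) (b := pw u n) hδu ih γ h
        push_cast
        push_cast at hd
        linarith
  have hpN : ∀ n, Novikov ω (pw u n) := by
    intro n
    induction n with
    | zero =>
        intro K
        refine (Set.finite_singleton 0).subset ?_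
        rintro γ ⟨h, -⟩
        have hz : γ = 0 := by
          by_contra hne
          exact h (by simp [pw, aone, hne])
        simp [hz]
    | succ n ih =>
        refine novikov_conv hu_nov ih (fun γ h => le_trans (hδu γ h) (by linarith)) ?_
        intro γ h
        have h2 := hpω n γ h
        have h3 : 0 ≤ (n : ℝ) * δ := by positivity
        linarith
  have hsN : Novikov ω s := by
    intro K
    obtain ⟨N, hN⟩ := exists_nat_gt (K / δ)
    refine ((Set.finite_lt_nat N).biUnion fun n _ => hpN n K).subset ?_
    rintro γ ⟨hγ, hK⟩
    have hex : ∃ n, pw u n γ ≠ 0 := by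
      by_contra hcon; push_neg at hcon
      exact hγ (by rw [hs_def]; simp [hcon])
    obtain ⟨n, hn⟩ := hex
    have hb1 := hpω n γ hn
    have hb2 : (n : ℝ) ≤ K / δ := by rw [le_div_iff₀ hδpos]; linarith
    have hb3 : n < N := by exact_mod_cast lt_of_le_of_lt hb2 hN
    exact Set.mem_biUnion hb3 ⟨hn, hK⟩
  have hliN : Novikov ω li := by
    refine novikov_shift (ω := ω) γ₀ (f := s) ?_ hsN
    intro ρ h hs0
    exact h (by simp [hli_def, hs0])
  -- ### Step 10: summability of the inverse for `t ≥ t₀`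
  refine ⟨li, h1, h2, hliN, t₀, ?_⟩
  intro t ht
  have hAt := hA t ht
  have hNs : (∑' γ : Γ, (‖s γ‖₊ : ℝ≥0∞) * w t γ) ≤ 2 := by
    rw [hs_def]
    exact s_bound (hw_mul t) (hw0 t) hAt
  have hli_top : (∑' γ : Γ, (‖li γ‖₊ : ℝ≥0∞) * w t γ) ≠ ⊤ := by
    have hsplit : ∀ γ : Γ, (‖li γ‖₊ : ℝ≥0∞) * w t γ
        = (‖c‖₊ : ℝ≥0∞) * ((‖s (γ + γ₀)‖₊ : ℝ≥0∞) * w t γ) := by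
      intro γ; rw [hli_def]; simp [nnnorm_mul, mul_assoc]
    rw [tsum_congr hsplit, ENNReal.tsum_mul_left]
    refine ENNReal.mul_ne_top ENNReal.coe_ne_top ?_
    rw [hshift t s]
    refine ENNReal.mul_ne_top (ENNReal.inv_ne_top.2 (hw_ne t γ₀)) ?_
    exact ne_top_of_le_ne_top (by norm_num) hNs
  have hsum : Summable fun γ : Γ => ‖li γ * Complex.exp (η γ + (t : ℂ) * (ω γ : ℂ))‖₊ := by
    apply ENNReal.tsum_coe_ne_top_iff_summable.1
    rw [tsum_congr (fun γ => hnorm t γ (li γ))]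
    exact hli_top
  have hfin := NNReal.summable_coe.2 hsum
  simpa [coe_nnnorm] using hfin
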